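/- Let a_1, ..., a_n be a symmetric sequence of positive integers with continued fraction convergents P_i/Q_i of [0; a_1, ..., a_n], and let a_0 be a positive integer such that m := (2*a_0*P_n + P_{n-1})/Q_n is a positive integer. Then, setting D := a_0^2 + m and X := a_0*Q_n + P_n, Y := Q_n, one has X^2 - D*Y^2 = (-1)^{n-1}. -/

import Mathlib

open Matrix

private def cfM (x : ℤ) : Matrix (Fin 2) (Fin 2) ℤ := !![x, 1; 1, 0]

private def cfProd (a : ℕ → ℤ) : ℕ → Matrix (Fin 2) (Fin 2) ℤ
  | 0 => 1
  | k+1 => cfProd a k * cfM (a (k+1))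

private def cfRprod (a : ℕ → ℤ) : ℕ → Matrix (Fin 2) (Fin 2) ℤ
  | 0 => 1
  | k+1 => cfM (a (k+1)) * cfRprod a k

private lemma cfProd_congr (a b : ℕ → ℤ) (k : ℕ)
    (h : ∀ i, 1 ≤ i → i ≤ k → a i = b i) : cfProd a k = cfProd b k := by
  induction k with
  | zero => rfl
  | succ k ih =>
    simp only [cfProd]
    rw [ih (fun i h1 h2 => h i h1 (h2.trans (Nat.le_succ k))), h (k+1) (by omega) le_rfl]

private lemma cfM_cons (x : ℤ) (a : ℕ → ℤ) (k : ℕ) :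
    cfM x * cfProd a k = cfProd (fun i => if i = 1 then x else a (i-1)) (k+1) := by
  induction k with
  | zero => simp [cfProd]
  | succ k ih =>
    show cfM x * (cfProd a k * cfM (a (k+1))) = cfProd _ (k+1) * cfM _
    rw [← mul_assoc, ih]
    norm_num

private lemma cfRprod_eq (a : ℕ → ℤ) (k : ℕ) :
    cfRprod a k = cfProd (fun i => a (k+1-i)) k := by
  induction k with
  | zero => rfl
  | succ k ih =>
    show cfM (a (k+1)) * cfRprod a k = _
    rw [ih, cfM_cons]
    apply cfProd_congr
    intro i h1 h2
    by_cases hi : i = 1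
    · simp [hi]
    · simp only [if_neg hi]
      congr 1
      omega

private lemma cfM_symm (x : ℤ) : (cfM x)ᵀ = cfM x := by
  ext i j
  fin_cases i <;> fin_cases j <;> rfl

private lemma cfProd_transpose (a : ℕ → ℤ) (k : ℕ) :
    (cfProd a k)ᵀ = cfRprod a k := by
  induction k with
  | zero => simp [cfProd, cfRprod]
  | succ k ih =>
    show (cfProd a k * cfM (a (k+1)))ᵀ = cfM (a (k+1)) * cfRprod a k
    rw [Matrix.transpose_mul, cfM_symm, ih]

private lemma cfProd_det (a : ℕ → ℤ) (k : ℕ) :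
    (cfProd a k).det = (-1) ^ k := by
  induction k with
  | zero => simp [cfProd]
  | succ k ih =>
    show (cfProd a k * cfM (a (k+1))).det = _
    rw [Matrix.det_mul, ih]
    have : (cfM (a (k+1))).det = -1 := by
      simp [cfM, Matrix.det_fin_two_of]
    rw [this]
    ring

/-- With `m = (2·a₀·P n + P (n-1)) / Q n` a positive integer and `D = a₀² + m`,
the pair `X = a₀·Q n + P n`, `Y = Q n` satisfies `X² - D·Y² = (-1)^(n-1)`. -/
theorem pell_solution
    (n : ℕ) (hn : 1 ≤ n) (a P Q : ℕ → ℤ)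
    (hapos : ∀ i, 1 ≤ i → i ≤ n → 0 < a i)
    (hsym : ∀ i, 1 ≤ i → i ≤ n → a i = a (n + 1 - i))
    (hP0 : P 0 = 0) (hP1 : P 1 = 1)
    (hQ0 : Q 0 = 1) (hQ1 : Q 1 = a 1)
    (hPrec : ∀ k, k + 2 ≤ n → P (k + 2) = a (k + 2) * P (k + 1) + P k)
    (hQrec : ∀ k, k + 2 ≤ n → Q (k + 2) = a (k + 2) * Q (k + 1) + Q k)
    (a0 m : ℤ) (ha0 : 0 < a0) (hm : 0 < m)
    (hmdef : m * Q n = 2 * a0 * P n + P (n - 1)) :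
    (a0 * Q n + P n) ^ 2 - (a0 ^ 2 + m) * (Q n) ^ 2 = (-1 : ℤ) ^ (n - 1) := by
  -- explicit form of the matrix product
  have hform : ∀ k, 1 ≤ k → k ≤ n → cfProd a k = !![Q k, Q (k-1); P k, P (k-1)] := by
    intro k hk1 hkn
    induction k with
    | zero => omega
    | succ k ih =>
      by_cases h1 : k = 0
      · subst h1
        show (1 : Matrix (Fin 2) (Fin 2) ℤ) * cfM (a 1) = _
        rw [one_mul]
        simp [cfM, hP0, hP1, hQ0, hQ1]
      · obtain ⟨j, rfl⟩ : ∃ j, k = j + 1 := ⟨k - 1, by omega⟩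
        have hrec := ih (by omega) (by omega)
        show cfProd a (j+1) * cfM (a (j+2)) = _
        rw [hrec]
        simp only [cfM]
        rw [show (j + 1 - 1) = j from rfl]
        rw [Matrix.mul_fin_two, hPrec j (by omega), hQrec j (by omega)]
        norm_num
        rw [mul_comm (Q (j+1)), mul_comm (P (j+1))]
        exact ⟨rfl, rfl⟩
  have hA := hform n hn le_rfl
  -- symmetry: the product matrix is symmetric
  have hsymM : (cfProd a n)ᵀ = cfProd a n := by
    rw [cfProd_transpose, cfRprod_eq]
    apply cfProd_congr
    intro i h1 h2
    exact (hsym i h1 h2).symm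
  -- extract P n = Q (n-1)
  have hPQ : P n = Q (n-1) := by
    have := congrFun (congrFun (hA ▸ hsymM) 1) 0
    simpa using this.symm
  -- determinant
  have hdet : Q n * P (n-1) - Q (n-1) * P n = (-1) ^ n := by
    have := cfProd_det a n
    rw [hA] at this
    simpa [Matrix.det_fin_two_of] using this
  have hkey : P n ^ 2 - P (n-1) * Q n = (-1 : ℤ) ^ (n - 1) := by
    have hne : (-1 : ℤ) ^ n = -(-1 : ℤ) ^ (n-1) := by
      conv_lhs => rw [show n = (n-1) + 1 by omega]
      rw [pow_succ]; ring
    rw [hPQ] at hdet ⊢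
    rw [hne] at hdet
    linarith [hdet]
  linear_combination hkey - Q n * hmdef
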